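/- Let H, S : ℝ³ → ℝ be differentiable functions, and let P : ℝ³ → M₃(ℝ) assign to each point a skew-symmetric matrix with P(x)∇S(x) = 0 for all x. Then at every regular point x (a point with P(x) ≠ 0), x is an equilibrium of the metriplectic system ẋ = P∇H + g(∇H)∇S if and only if x is an equilibrium of the unperturbed Hamiltonian system ẋ = P∇H; that is, P(x)∇H(x) + g(∇H(x))∇S(x) = 0 if and only if P(x)∇H(x) = 0. -/

import Mathlib

open Matrix RealInnerProductSpace

/-- The dissipative tensor `g(a) = a ⊗ a − ‖a‖² I` of the paper, as a 3×3 matrix;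
it acts by `g(a) v = ⟨a, v⟩ a − ‖a‖² v`. -/
noncomputable def gmat (a : EuclideanSpace ℝ (Fin 3)) : Matrix (Fin 3) (Fin 3) ℝ :=
  Matrix.vecMulVec a a - (‖a‖ ^ 2) • 1

/-- The gradient of a function on ℝ³ with respect to the standard inner product. -/
noncomputable def grad (f : EuclideanSpace ℝ (Fin 3) → ℝ) (x : EuclideanSpace ℝ (Fin 3)) :
    EuclideanSpace ℝ (Fin 3) := gradient f x

/-- Two vectors whose cross products with a common nonzero vector `w` vanish are
parallel to each other (their own cross product vanishes). -/
lemma cross_dep (w0 w1 w2 u0 u1 u2 v0 v1 v2 : ℝ)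
    (hw : w0 ≠ 0 ∨ w1 ≠ 0 ∨ w2 ≠ 0)
    (hu1 : w1*u2 - w2*u1 = 0) (hu2 : w2*u0 - w0*u2 = 0) (hu3 : w0*u1 - w1*u0 = 0)
    (hv1 : w1*v2 - w2*v1 = 0) (hv2 : w2*v0 - w0*v2 = 0) (hv3 : w0*v1 - w1*v0 = 0) :
    u1*v2 - u2*v1 = 0 ∧ u2*v0 - u0*v2 = 0 ∧ u0*v1 - u1*v0 = 0 := by
  rcases hw with hk | hk | hk
  · have a1 : u1 = w1 * (u0/w0) := by field_simp; linarith
    have a2 : u2 = w2 * (u0/w0) := by field_simp; linarith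
    have b1 : v1 = w1 * (v0/w0) := by field_simp; linarith
    have b2 : v2 = w2 * (v0/w0) := by field_simp; linarith
    refine ⟨?_, ?_, ?_⟩ <;> simp only [a1, a2, b1, b2] <;> ring
  · have a1 : u0 = w0 * (u1/w1) := by field_simp; linarith
    have a2 : u2 = w2 * (u1/w1) := by field_simp; linarith
    have b1 : v0 = w0 * (v1/w1) := by field_simp; linarith
    have b2 : v2 = w2 * (v1/w1) := by field_simp; linarith
    refine ⟨?_, ?_, ?_⟩ <;> simp only [a1, a2, b1, b2] <;> ring
  · have a1 : u0 = w0 * (u2/w2) := by field_simp; linarith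
    have a2 : u1 = w1 * (u2/w2) := by field_simp; linarith
    have b1 : v0 = w0 * (v2/w2) := by field_simp; linarith
    have b2 : v1 = w1 * (v2/w2) := by field_simp; linarith
    refine ⟨?_, ?_, ?_⟩ <;> simp only [a1, a2, b1, b2] <;> ring

/-- The scalar core of the theorem: with `w ≠ 0`, `w × v = 0`, the equation
`w × u + ⟨u,v⟩u − ‖u‖²v = 0` holds iff `w × u = 0`. -/
lemma scalar_main (w0 w1 w2 u0 u1 u2 v0 v1 v2 : ℝ)
    (hw : w0 ≠ 0 ∨ w1 ≠ 0 ∨ w2 ≠ 0)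
    (hc0 : w1*v2 - w2*v1 = 0) (hc1 : w2*v0 - w0*v2 = 0) (hc2 : w0*v1 - w1*v0 = 0) :
    ((w1*u2 - w2*u1) + u0*(u0*v0+u1*v1+u2*v2) - (u0^2+u1^2+u2^2)*v0 = 0
      ∧ (w2*u0 - w0*u2) + u1*(u0*v0+u1*v1+u2*v2) - (u0^2+u1^2+u2^2)*v1 = 0
      ∧ (w0*u1 - w1*u0) + u2*(u0*v0+u1*v1+u2*v2) - (u0^2+u1^2+u2^2)*v2 = 0)
    ↔ (w1*u2 - w2*u1 = 0 ∧ w2*u0 - w0*u2 = 0 ∧ w0*u1 - w1*u0 = 0) := by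
  constructor
  · rintro ⟨E0, E1, E2⟩
    have key : (u1*v2 - u2*v1)^2 + (u2*v0 - u0*v2)^2 + (u0*v1 - u1*v0)^2 = 0 := by
      linear_combination (-v0) * E0 - v1 * E1 - v2 * E2 - u0 * hc0 - u1 * hc1 - u2 * hc2
    have c12 : u1*v2 - u2*v1 = 0 := by
      nlinarith [sq_nonneg (u1*v2 - u2*v1), sq_nonneg (u2*v0 - u0*v2), sq_nonneg (u0*v1 - u1*v0)]
    have c20 : u2*v0 - u0*v2 = 0 := by
      nlinarith [sq_nonneg (u1*v2 - u2*v1), sq_nonneg (u2*v0 - u0*v2), sq_nonneg (u0*v1 - u1*v0)]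
    have c01 : u0*v1 - u1*v0 = 0 := by
      nlinarith [sq_nonneg (u1*v2 - u2*v1), sq_nonneg (u2*v0 - u0*v2), sq_nonneg (u0*v1 - u1*v0)]
    refine ⟨?_, ?_, ?_⟩
    · linear_combination E0 - u1 * c01 + u2 * c20
    · linear_combination E1 - u2 * c12 + u0 * c01
    · linear_combination E2 - u0 * c20 + u1 * c12
  · rintro ⟨h0, h1, h2⟩
    obtain ⟨c12, c20, c01⟩ := cross_dep w0 w1 w2 u0 u1 u2 v0 v1 v2 hw h0 h1 h2 hc0 hc1 hc2
    refine ⟨?_, ?_, ?_⟩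
    · linear_combination h0 + u1 * c01 - u2 * c20
    · linear_combination h1 + u2 * c12 - u0 * c01
    · linear_combination h2 + u0 * c20 - u1 * c12

/-- At every regular point, the metriplectic system `ẋ = P∇H + g(∇H)∇S` and the
unperturbed Hamiltonian system `ẋ = P∇H` have the same equilibria. -/
theorem same_regular_equilibria (H S : EuclideanSpace ℝ (Fin 3) → ℝ)
    (hH : Differentiable ℝ H) (hS : Differentiable ℝ S)
    (P : EuclideanSpace ℝ (Fin 3) → Matrix (Fin 3) (Fin 3) ℝ)
    (hskew : ∀ x, (P x)ᵀ = -(P x))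
    (hCasimir : ∀ x, P x *ᵥ grad S x = 0)
    (x : EuclideanSpace ℝ (Fin 3)) (hreg : P x ≠ 0) :
    P x *ᵥ grad H x + gmat (grad H x) *ᵥ grad S x = 0 ↔ P x *ᵥ grad H x = 0 := by
  have sk : ∀ i j, P x j i = - P x i j := fun i j => by
    simpa using congrFun (congrFun (hskew x) i) j
  have mv : ∀ (q : Matrix (Fin 3) (Fin 3) ℝ) (y : EuclideanSpace ℝ (Fin 3)) (i : Fin 3),
      (q *ᵥ y) i = q i 0 * y 0 + q i 1 * y 1 + q i 2 * y 2 := by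
    intro q y i
    simp [Matrix.mulVec, dotProduct, Fin.sum_univ_three]
  have h00 : P x 0 0 = 0 := by have := sk 0 0; linarith
  have h11 : P x 1 1 = 0 := by have := sk 1 1; linarith
  have h22 : P x 2 2 = 0 := by have := sk 2 2; linarith
  have e01 : P x 0 1 = -(P x 1 0) := by have := sk 1 0; linarith
  have e12 : P x 1 2 = -(P x 2 1) := by have := sk 2 1; linarith
  have e20 : P x 2 0 = -(P x 0 2) := by have := sk 0 2; linarith
  -- regularity gives a nonzero component of the "vorticity" vector w
  have hw : P x 2 1 ≠ 0 ∨ P x 0 2 ≠ 0 ∨ P x 1 0 ≠ 0 := by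
    by_contra hcon
    push_neg at hcon
    obtain ⟨z0, z1, z2⟩ := hcon
    apply hreg
    ext i j
    fin_cases i <;> fin_cases j <;>
      simp only [Matrix.zero_apply] <;>
      first
        | exact h00 | exact h11 | exact h22
        | (show P x 0 1 = 0; rw [e01, z2]; ring)
        | (show P x 1 2 = 0; rw [e12, z0]; ring)
        | (show P x 2 0 = 0; rw [e20, z1]; ring)
        | exact z0 | exact z1 | exact z2
  have hnu : ‖grad H x‖^2 = grad H x 0 ^ 2 + grad H x 1 ^ 2 + grad H x 2 ^ 2 := by
    rw [EuclideanSpace.norm_eq, Real.sq_sqrt (by positivity), Fin.sum_univ_three]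
    simp only [Real.norm_eq_abs, sq_abs]
  -- components of P x *ᵥ grad H x
  have ep0 : (P x *ᵥ grad H x) 0 = P x 0 2 * grad H x 2 - P x 1 0 * grad H x 1 := by
    rw [mv, h00, e01]; ring
  have ep1 : (P x *ᵥ grad H x) 1 = P x 1 0 * grad H x 0 - P x 2 1 * grad H x 2 := by
    rw [mv, h11, e12]; ring
  have ep2 : (P x *ᵥ grad H x) 2 = P x 2 1 * grad H x 1 - P x 0 2 * grad H x 0 := by
    rw [mv, h22, e20]; ring
  -- Casimir components
  have hcv : ∀ i, (P x *ᵥ grad S x) i = 0 := fun i => by rw [hCasimir x]; rfl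
  have hc0 : P x 0 2 * grad S x 2 - P x 1 0 * grad S x 1 = 0 := by
    have := hcv 0; rw [mv, h00, e01] at this; linarith
  have hc1 : P x 1 0 * grad S x 0 - P x 2 1 * grad S x 2 = 0 := by
    have := hcv 1; rw [mv, h11, e12] at this; linarith
  have hc2 : P x 2 1 * grad S x 1 - P x 0 2 * grad S x 0 = 0 := by
    have := hcv 2; rw [mv, h22, e20] at this; linarith
  -- components of the dissipative term
  have eg : ∀ i, (gmat (grad H x) *ᵥ grad S x) i
      = grad H x i * (grad H x 0 * grad S x 0 + grad H x 1 * grad S x 1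
          + grad H x 2 * grad S x 2)
        - (grad H x 0 ^ 2 + grad H x 1 ^ 2 + grad H x 2 ^ 2) * grad S x i := by
    intro i
    simp [gmat, Matrix.mulVec, dotProduct, Fin.sum_univ_three, Matrix.sub_apply,
      Matrix.vecMulVec_apply, Matrix.smul_apply, Matrix.one_apply, hnu]
    fin_cases i <;> simp <;> ring
  have main := scalar_main (P x 2 1) (P x 0 2) (P x 1 0)
    (grad H x 0) (grad H x 1) (grad H x 2) (grad S x 0) (grad S x 1) (grad S x 2)
    hw hc0 hc1 hc2
  constructor
  · intro h
    have hE : ∀ i, (P x *ᵥ grad H x) i + (gmat (grad H x) *ᵥ grad S x) i = 0 :=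
      fun i => congrFun h i
    have E0 := hE 0; rw [ep0, eg 0] at E0
    have E1 := hE 1; rw [ep1, eg 1] at E1
    have E2 := hE 2; rw [ep2, eg 2] at E2
    obtain ⟨f0, f1, f2⟩ := main.mp ⟨by linarith, by linarith, by linarith⟩
    funext i
    fin_cases i
    · show (P x *ᵥ grad H x) 0 = 0; rw [ep0]; linarith
    · show (P x *ᵥ grad H x) 1 = 0; rw [ep1]; linarith
    · show (P x *ᵥ grad H x) 2 = 0; rw [ep2]; linarith
  · intro h
    have hu : ∀ i, (P x *ᵥ grad H x) i = 0 := fun i => congrFun h i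
    have f0 := hu 0; rw [ep0] at f0
    have f1 := hu 1; rw [ep1] at f1
    have f2 := hu 2; rw [ep2] at f2
    obtain ⟨E0, E1, E2⟩ := main.mpr ⟨f0, f1, f2⟩
    funext i
    show (P x *ᵥ grad H x) i + (gmat (grad H x) *ᵥ grad S x) i = 0
    fin_cases i
    · show (P x *ᵥ grad H x) 0 + (gmat (grad H x) *ᵥ grad S x) 0 = 0
      rw [ep0, eg 0]; linarith
    · show (P x *ᵥ grad H x) 1 + (gmat (grad H x) *ᵥ grad S x) 1 = 0
      rw [ep1, eg 1]; linarith
    · show (P x *ᵥ grad H x) 2 + (gmat (grad H x) *ᵥ grad S x) 2 = 0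
      rw [ep2, eg 2]; linarith
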